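/- Let p*, p₀, p₁ be strictly positive probability mass functions on a finite set X. Suppose sup_x |p*(x) − p₀(x)| ≤ ε and sup_x |log p₀(x) − log p₁(x)| ≤ M, and suppose there is a subset D ⊆ X with p₁(D) − p₀(D) = γ − δ > 0. Then D_KL(p* ‖ p₁) ≥ D_KL(p* ‖ p₀) + 2(γ − δ)² − ε·M·|X|. -/

import Mathlib

open Real
open Finset

noncomputable def Gfun (t : ℝ) : ℝ := (t + 1) * Real.log t - 2 * t + 2
noncomputable def Hfun (t : ℝ) : ℝ := (2 * t ^ 2 + 4 * t) * Real.log t - 5 * t ^ 2 + 4 * t + 1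

lemma logLB {t : ℝ} (ht : 0 < t) : Real.log t + 1 / t - 1 ≥ 0 := by
  have h := Real.log_le_sub_one_of_pos (x := t⁻¹) (by positivity)
  rw [Real.log_inv] at h
  have h2 : t⁻¹ = 1 / t := by ring
  rw [h2] at h; linarith

lemma Gderiv {t : ℝ} (ht : 0 < t) :
    HasDerivAt Gfun (Real.log t + 1 / t - 1) t := by
  have h1 : HasDerivAt (fun t : ℝ => (t + 1) * Real.log t)
      (1 * Real.log t + (t + 1) * t⁻¹) t :=
    (((hasDerivAt_id t).add_const 1)).mul (Real.hasDerivAt_log ht.ne')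
  have h2 : HasDerivAt Gfun (1 * Real.log t + (t + 1) * t⁻¹ - 2 * 1) t := by
    unfold Gfun
    exact ((h1.sub (((hasDerivAt_id t)).const_mul 2)).add_const 2)
  convert h2 using 1
  field_simp
  ring

lemma Gmono : MonotoneOn Gfun (Set.Ioi 0) := by
  apply monotoneOn_of_deriv_nonneg (convex_Ioi 0)
  · unfold Gfun
    apply ContinuousOn.add (ContinuousOn.sub ?_ (by fun_prop)) (by fun_prop)
    exact (continuous_id.add continuous_const).continuousOn.mul
        (Real.continuousOn_log.mono (by intro x hx; exact ne_of_gt hx))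
  · intro t ht
    rw [interior_Ioi] at ht
    exact ((Gderiv ht).differentiableAt).differentiableWithinAt
  · intro t ht
    rw [interior_Ioi] at ht
    rw [(Gderiv ht).deriv]
    exact logLB ht



lemma Hderiv {t : ℝ} (ht : 0 < t) : HasDerivAt Hfun (4 * Gfun t) t := by
  have h1 : HasDerivAt (fun t : ℝ => (2 * t ^ 2 + 4 * t) * Real.log t)
      ((4 * t + 4) * Real.log t + (2 * t ^ 2 + 4 * t) * t⁻¹) t := by
    have := ((((hasDerivAt_pow 2 t).const_mul 2).fun_add (((hasDerivAt_id t)).const_mul 4))).fun_mul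
      (Real.hasDerivAt_log ht.ne')
    refine this.congr_deriv ?_
    first
    | (simp only [id_eq]; push_cast; ring)
    | (push_cast; ring)
  have h2 : HasDerivAt Hfun
      ((4 * t + 4) * Real.log t + (2 * t ^ 2 + 4 * t) * t⁻¹ - 10 * t + 4) t := by
    have := (((h1.fun_sub ((hasDerivAt_pow 2 t).const_mul 5)).fun_add
      ((hasDerivAt_id t).const_mul 4)).add_const 1)
    unfold Hfun
    refine this.congr_deriv ?_
    first
    | (simp only [id_eq]; push_cast; ring)
    | (push_cast; ring)
  convert h2 using 1
  unfold Gfun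
  have : t ≠ 0 := ht.ne'
  field_simp
  ring

lemma Hnonneg {t : ℝ} (ht : 0 < t) : 0 ≤ Hfun t := by
  have hH1 : Hfun 1 = 0 := by norm_num [Hfun]
  have hG1 : Gfun 1 = 0 := by simp [Gfun]
  rcases le_or_gt 1 t with h | h
  · -- H monotone on Ici 1
    have hmono : MonotoneOn Hfun (Set.Ici 1) := by
      apply monotoneOn_of_deriv_nonneg (convex_Ici 1)
      · intro x hx
        exact (Hderiv (lt_of_lt_of_le one_pos hx)).continuousAt.continuousWithinAt
      · intro x hx
        rw [interior_Ici] at hx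
        exact ((Hderiv (lt_trans one_pos hx)).differentiableAt).differentiableWithinAt
      · intro x hx
        rw [interior_Ici] at hx
        rw [(Hderiv (lt_trans one_pos hx)).deriv]
        have : Gfun 1 ≤ Gfun x := Gmono (Set.mem_Ioi.2 one_pos)
          (Set.mem_Ioi.2 (lt_trans one_pos hx)) hx.le
        rw [hG1] at this; linarith
    have := hmono (Set.mem_Ici.2 le_rfl) (Set.mem_Ici.2 h) h
    rw [hH1] at this; exact this
  · have hanti : AntitoneOn Hfun (Set.Ioc 0 1) := by
      apply antitoneOn_of_deriv_nonpos (convex_Ioc 0 1)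
      · intro x hx
        exact (Hderiv hx.1).continuousAt.continuousWithinAt
      · intro x hx
        rw [interior_Ioc] at hx
        exact ((Hderiv hx.1).differentiableAt).differentiableWithinAt
      · intro x hx
        rw [interior_Ioc] at hx
        rw [(Hderiv hx.1).deriv]
        have : Gfun x ≤ Gfun 1 := Gmono (Set.mem_Ioi.2 hx.1)
          (Set.mem_Ioi.2 one_pos) hx.2.le
        rw [hG1] at this; linarith
    have := hanti (Set.mem_Ioc.2 ⟨ht, h.le⟩) (Set.mem_Ioc.2 ⟨one_pos, le_rfl⟩) h.le
    rw [hH1] at this; exact this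

lemma pointwise {p q : ℝ} (hp : 0 < p) (hq : 0 < q) :
    p - q + 3 * (p - q) ^ 2 / (2 * (p + 2 * q)) ≤ p * Real.log (p / q) := by
  set t := p / q with htdef
  have ht : 0 < t := by positivity
  have hpq : p = t * q := by rw [htdef, div_mul_cancel₀ p hq.ne']
  have hH := Hnonneg ht
  unfold Hfun at hH
  have key : 3 * (p - q) ^ 2 / (2 * (p + 2 * q)) ≤ p * Real.log t - (p - q) := by
    rw [div_le_iff₀ (by positivity)]
    rw [hpq]
    nlinarith [mul_nonneg (sq_nonneg q) hH, sq_nonneg q, hq.le]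
  linarith

-- Pinsker-type bound
theorem pinsker {X : Type*} [Fintype X] (p0 p1 : X → ℝ)
    (hp0 : ∀ x, 0 < p0 x) (hp1 : ∀ x, 0 < p1 x)
    (h0sum : ∑ x, p0 x = 1) (h1sum : ∑ x, p1 x = 1) :
    (1/2) * (∑ x, |p0 x - p1 x|) ^ 2 ≤ ∑ x, p0 x * Real.log (p0 x / p1 x) := by
  set w : X → ℝ := fun x => (p0 x + 2 * p1 x) / 3 with hw
  have hwpos : ∀ x, 0 < w x := fun x => by have := hp0 x; have := hp1 x; positivity
  have hwsum : ∑ x, w x = 1 := by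
    simp only [hw]
    rw [← Finset.sum_div, Finset.sum_add_distrib, h0sum, ← Finset.mul_sum, h1sum]
    norm_num
  -- Cauchy-Schwarz
  have hcs : (∑ x, |p0 x - p1 x|) ^ 2 ≤ ∑ x, (p0 x - p1 x) ^ 2 / w x := by
    have h := Finset.sum_mul_sq_le_sq_mul_sq Finset.univ
      (fun x => |p0 x - p1 x| / Real.sqrt (w x)) (fun x => Real.sqrt (w x))
    have heq : ∀ x : X, |p0 x - p1 x| / Real.sqrt (w x) * Real.sqrt (w x) = |p0 x - p1 x| := by
      intro x
      field_simp [Real.sqrt_ne_zero'.2 (hwpos x)]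
    have heq2 : ∀ x : X, (|p0 x - p1 x| / Real.sqrt (w x)) ^ 2 = (p0 x - p1 x) ^ 2 / w x := by
      intro x
      rw [div_pow, sq_abs, Real.sq_sqrt (hwpos x).le]
    have heq3 : ∀ x : X, (Real.sqrt (w x)) ^ 2 = w x := fun x => Real.sq_sqrt (hwpos x).le
    simp only [heq, heq2, heq3] at h
    rw [hwsum, mul_one] at h
    exact h
  have hpt : ∑ x, ((p0 x - p1 x) + (1/2) * ((p0 x - p1 x) ^ 2 / w x))
      ≤ ∑ x, p0 x * Real.log (p0 x / p1 x) := by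
    apply Finset.sum_le_sum
    intro x _
    have := pointwise (hp0 x) (hp1 x)
    have hwx : (1/2) * ((p0 x - p1 x) ^ 2 / w x) = 3 * (p0 x - p1 x) ^ 2 / (2 * (p0 x + 2 * p1 x)) := by
      rw [hw]
      have := hp0 x; have := hp1 x
      field_simp
    rw [hwx]
    linarith
  have hfirst : ∑ x, ((p0 x - p1 x) + (1/2) * ((p0 x - p1 x) ^ 2 / w x))
      = (1/2) * ∑ x, (p0 x - p1 x) ^ 2 / w x := by
    rw [Finset.sum_add_distrib, Finset.sum_sub_distrib, h0sum, h1sum, ← Finset.mul_sum]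
    ring
  rw [hfirst] at hpt
  nlinarith [hcs, hpt]

theorem kl_lower_bound_with_error {X : Type*} [Fintype X] [Nonempty X]
    (ps p0 p1 : X → ℝ) (ε M γ δ : ℝ) (D : Finset X)
    (hps : ∀ x, 0 < ps x) (hp0 : ∀ x, 0 < p0 x) (hp1 : ∀ x, 0 < p1 x)
    (hpsum : ∑ x, ps x = 1) (h0sum : ∑ x, p0 x = 1) (h1sum : ∑ x, p1 x = 1)
    (hε : ∀ x, |ps x - p0 x| ≤ ε)
    (hM : ∀ x, |Real.log (p0 x) - Real.log (p1 x)| ≤ M)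
    (hgap : (∑ x ∈ D, p1 x) - (∑ x ∈ D, p0 x) = γ - δ)
    (hpos : γ - δ > 0) :
    ∑ x, ps x * Real.log (ps x / p1 x)
      ≥ (∑ x, ps x * Real.log (ps x / p0 x))
        + 2 * (γ - δ) ^ 2 - ε * M * (Fintype.card X) := by
  classical
  have hεnn : 0 ≤ ε := le_trans (abs_nonneg _) (hε (Classical.arbitrary X))
  have hMnn : 0 ≤ M := le_trans (abs_nonneg _) (hM (Classical.arbitrary X))
  -- total variation bound
  have hDsum : ∑ x ∈ D, (p1 x - p0 x) = γ - δ := by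
    rw [Finset.sum_sub_distrib]; exact hgap
  have htot : ∑ x, (p1 x - p0 x) = 0 := by
    rw [Finset.sum_sub_distrib, h1sum, h0sum]; ring
  have hcompl : ∑ x ∈ Dᶜ, (p1 x - p0 x) = -(γ - δ) := by
    have := Finset.sum_add_sum_compl D (fun x => p1 x - p0 x)
    rw [htot, hDsum] at this; linarith
  have hTV : 2 * (γ - δ) ≤ ∑ x, |p0 x - p1 x| := by
    have h1 : ∑ x, |p0 x - p1 x| = (∑ x ∈ D, |p1 x - p0 x|) + ∑ x ∈ Dᶜ, |p1 x - p0 x| := by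
      rw [Finset.sum_add_sum_compl D (fun x => |p1 x - p0 x|)]
      exact Finset.sum_congr rfl fun x _ => (abs_sub_comm _ _)
    have h2 : γ - δ ≤ ∑ x ∈ D, |p1 x - p0 x| := by
      calc γ - δ = |∑ x ∈ D, (p1 x - p0 x)| := by rw [hDsum, abs_of_pos hpos]
        _ ≤ _ := Finset.abs_sum_le_sum_abs _ _
    have h3 : γ - δ ≤ ∑ x ∈ Dᶜ, |p1 x - p0 x| := by
      calc γ - δ = |∑ x ∈ Dᶜ, (p1 x - p0 x)| := by rw [hcompl, abs_neg, abs_of_pos hpos]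
        _ ≤ _ := Finset.abs_sum_le_sum_abs _ _
    linarith
  -- Pinsker
  have hKL01 : 2 * (γ - δ) ^ 2 ≤ ∑ x, p0 x * Real.log (p0 x / p1 x) := by
    have hp := pinsker p0 p1 hp0 hp1 h0sum h1sum
    nlinarith [hTV, hpos]
  -- decomposition
  have hdecomp : ∑ x, ps x * Real.log (ps x / p1 x)
      = (∑ x, ps x * Real.log (ps x / p0 x))
        + (∑ x, p0 x * Real.log (p0 x / p1 x))
        + ∑ x, (ps x - p0 x) * (Real.log (p0 x) - Real.log (p1 x)) := by
    rw [← Finset.sum_add_distrib, ← Finset.sum_add_distrib]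
    apply Finset.sum_congr rfl
    intro x _
    rw [Real.log_div (hps x).ne' (hp1 x).ne', Real.log_div (hps x).ne' (hp0 x).ne',
      Real.log_div (hp0 x).ne' (hp1 x).ne']
    ring
  -- cross term bound
  have hcross : -(ε * M * (Fintype.card X))
      ≤ ∑ x, (ps x - p0 x) * (Real.log (p0 x) - Real.log (p1 x)) := by
    have hterm : ∀ x : X, -(ε * M) ≤ (ps x - p0 x) * (Real.log (p0 x) - Real.log (p1 x)) := by
      intro x
      have habs : |(ps x - p0 x) * (Real.log (p0 x) - Real.log (p1 x))| ≤ ε * M := by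
        rw [abs_mul]
        exact mul_le_mul (hε x) (hM x) (abs_nonneg _) hεnn
      linarith [neg_abs_le ((ps x - p0 x) * (Real.log (p0 x) - Real.log (p1 x))), habs]
    calc -(ε * M * (Fintype.card X)) = (Finset.univ : Finset X).card • (-(ε * M)) := by
          simp [Finset.card_univ, nsmul_eq_mul]; ring
      _ ≤ _ := Finset.card_nsmul_le_sum _ _ _ (fun x _ => hterm x)
  rw [ge_iff_le, hdecomp]
  linarith
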